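/- The explicit maps e₁ and e₂ define rational ℂ^×-actions: for i = 1, 2, e_i^1(x) = x for all x ∈ (ℝ_{>0})⁶, and e_i^{c} ∘ e_i^{c′}(x) = e_i^{cc′}(x) for all c, c′ ∈ ℝ_{>0} and all x ∈ (ℝ_{>0})⁶. -/

import Mathlib

noncomputable section

/-- Denominator of 𝒞₁ (also the function ε₁): x₀/x₁ + x₀x₂/(x₁²x₃) + x₀x₂x₄/(x₁²x₃²x₅). -/
def s1 (x : Fin 6 → ℝ) : ℝ :=
  x 0 / x 1 + x 0 * x 2 / ((x 1) ^ 2 * x 3) + x 0 * x 2 * x 4 / ((x 1) ^ 2 * (x 3) ^ 2 * x 5)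

/-- Numerator of 𝒞₁ = denominator of 𝒞₃. -/
def d3 (c : ℝ) (x : Fin 6 → ℝ) : ℝ :=
  c * x 0 / x 1 + x 0 * x 2 / ((x 1) ^ 2 * x 3) + x 0 * x 2 * x 4 / ((x 1) ^ 2 * (x 3) ^ 2 * x 5)

/-- Numerator of 𝒞₃ = denominator of 𝒞₅. -/
def d5 (c : ℝ) (x : Fin 6 → ℝ) : ℝ :=
  c * x 0 / x 1 + c * x 0 * x 2 / ((x 1) ^ 2 * x 3)
    + x 0 * x 2 * x 4 / ((x 1) ^ 2 * (x 3) ^ 2 * x 5)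

/-- 𝒞₁, 𝒞₃, 𝒞₅. -/
def C1 (c : ℝ) (x : Fin 6 → ℝ) : ℝ := d3 c x / s1 x
def C3 (c : ℝ) (x : Fin 6 → ℝ) : ℝ := d5 c x / d3 c x
def C5 (c : ℝ) (x : Fin 6 → ℝ) : ℝ := c * s1 x / d5 c x

/-- Denominator of 𝒞₂ (also the function ε₂): x₁³/x₂ + x₁³x₃³/(x₂²x₄). -/
def s2 (x : Fin 6 → ℝ) : ℝ :=
  (x 1) ^ 3 / x 2 + (x 1) ^ 3 * (x 3) ^ 3 / ((x 2) ^ 2 * x 4)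

/-- Numerator of 𝒞₂ = denominator of 𝒞₄. -/
def d4 (c : ℝ) (x : Fin 6 → ℝ) : ℝ :=
  c * (x 1) ^ 3 / x 2 + (x 1) ^ 3 * (x 3) ^ 3 / ((x 2) ^ 2 * x 4)

/-- 𝒞₂, 𝒞₄. -/
def C2 (c : ℝ) (x : Fin 6 → ℝ) : ℝ := d4 c x / s2 x
def C4 (c : ℝ) (x : Fin 6 → ℝ) : ℝ := c * s2 x / d4 c x

/-- The action e₁^c(x) := (x₀, 𝒞₁x₁, x₂, 𝒞₃x₃, x₄, 𝒞₅x₅). -/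
def e1act (c : ℝ) (x : Fin 6 → ℝ) : Fin 6 → ℝ :=
  ![x 0, C1 c x * x 1, x 2, C3 c x * x 3, x 4, C5 c x * x 5]

/-- The action e₂^c(x) := (x₀, x₁, 𝒞₂x₂, x₃, 𝒞₄x₄, x₅). -/
def e2act (c : ℝ) (x : Fin 6 → ℝ) : Fin 6 → ℝ :=
  ![x 0, x 1, C2 c x * x 2, x 3, C4 c x * x 4, x 5]

lemma gen1 (c c' t1 t2 t3 : ℝ) (hc' : 0 < c')
    (h1 : 0 < t1) (h2 : 0 < t2) (h3 : 0 < t3) :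
    (t1 * (t1 + t2 + t3) / (c' * t1 + t2 + t3)
      + t2 * (t1 + t2 + t3) ^ 2 / ((c' * t1 + t2 + t3) * (c' * t1 + c' * t2 + t3))
      + t3 * (t1 + t2 + t3) / (c' * (c' * t1 + c' * t2 + t3))
        = (t1 + t2 + t3) / c')
    ∧ (c * t1 * (t1 + t2 + t3) / (c' * t1 + t2 + t3)
      + t2 * (t1 + t2 + t3) ^ 2 / ((c' * t1 + t2 + t3) * (c' * t1 + c' * t2 + t3))
      + t3 * (t1 + t2 + t3) / (c' * (c' * t1 + c' * t2 + t3))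
        = (c * c' * t1 + t2 + t3) * (t1 + t2 + t3) / (c' * (c' * t1 + t2 + t3)))
    ∧ (c * t1 * (t1 + t2 + t3) / (c' * t1 + t2 + t3)
      + c * t2 * (t1 + t2 + t3) ^ 2 / ((c' * t1 + t2 + t3) * (c' * t1 + c' * t2 + t3))
      + t3 * (t1 + t2 + t3) / (c' * (c' * t1 + c' * t2 + t3))
        = (c * c' * t1 + c * c' * t2 + t3) * (t1 + t2 + t3)
            / (c' * (c' * t1 + c' * t2 + t3))) := by
  have hA : c' * t1 + t2 + t3 ≠ 0 := by positivity
  have hB : c' * t1 + c' * t2 + t3 ≠ 0 := by positivity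
  have hc0 : c' ≠ 0 := hc'.ne'
  refine ⟨?_, ?_, ?_⟩ <;> (field_simp; ring)

lemma gen2 (c c' u1 u2 : ℝ) (hc' : 0 < c')
    (h1 : 0 < u1) (h2 : 0 < u2) :
    (u1 * (u1 + u2) / (c' * u1 + u2) + u2 * (u1 + u2) / (c' * (c' * u1 + u2))
        = (u1 + u2) / c')
    ∧ (c * u1 * (u1 + u2) / (c' * u1 + u2) + u2 * (u1 + u2) / (c' * (c' * u1 + u2))
        = (c * c' * u1 + u2) * (u1 + u2) / (c' * (c' * u1 + u2))) := by
  have hA : c' * u1 + u2 ≠ 0 := by positivity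
  have hc0 : c' ≠ 0 := hc'.ne'
  constructor <;> field_simp

section comp
variable {c c' : ℝ} {x : Fin 6 → ℝ}

lemma s1_pos (hx : ∀ i, 0 < x i) : 0 < s1 x := by
  have p0 := hx 0; have p1 := hx 1; have p2 := hx 2; have p3 := hx 3
  have p4 := hx 4; have p5 := hx 5
  unfold s1; positivity

lemma d3_pos (hc : 0 < c) (hx : ∀ i, 0 < x i) : 0 < d3 c x := by
  have p0 := hx 0; have p1 := hx 1; have p2 := hx 2; have p3 := hx 3
  have p4 := hx 4; have p5 := hx 5
  unfold d3; positivity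

lemma d5_pos (hc : 0 < c) (hx : ∀ i, 0 < x i) : 0 < d5 c x := by
  have p0 := hx 0; have p1 := hx 1; have p2 := hx 2; have p3 := hx 3
  have p4 := hx 4; have p5 := hx 5
  unfold d5; positivity

lemma s2_pos (hx : ∀ i, 0 < x i) : 0 < s2 x := by
  have p1 := hx 1; have p2 := hx 2; have p3 := hx 3; have p4 := hx 4
  unfold s2; positivity

lemma d4_pos (hc : 0 < c) (hx : ∀ i, 0 < x i) : 0 < d4 c x := by
  have p1 := hx 1; have p2 := hx 2; have p3 := hx 3; have p4 := hx 4
  unfold d4; positivity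

lemma hS_eq : s1 x = x 0 / x 1 + x 0 * x 2 / (x 1 ^ 2 * x 3)
    + x 0 * x 2 * x 4 / (x 1 ^ 2 * x 3 ^ 2 * x 5) := rfl

lemma hD3_eq : d3 c x = c * (x 0 / x 1) + x 0 * x 2 / (x 1 ^ 2 * x 3)
    + x 0 * x 2 * x 4 / (x 1 ^ 2 * x 3 ^ 2 * x 5) := by
  rw [d3]; ring

lemma hD5_eq : d5 c x = c * (x 0 / x 1) + c * (x 0 * x 2 / (x 1 ^ 2 * x 3))
    + x 0 * x 2 * x 4 / (x 1 ^ 2 * x 3 ^ 2 * x 5) := by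
  rw [d5]; ring

lemma hS2_eq : s2 x = x 1 ^ 3 / x 2 + x 1 ^ 3 * x 3 ^ 3 / (x 2 ^ 2 * x 4) := rfl

lemma hD4_eq : d4 c x = c * (x 1 ^ 3 / x 2) + x 1 ^ 3 * x 3 ^ 3 / (x 2 ^ 2 * x 4) := by
  rw [d4]; ring

-- term rewrites
lemma term1 (hc' : 0 < c') (hx : ∀ i, 0 < x i) :
    x 0 / (C1 c' x * x 1) = x 0 / x 1 * s1 x / d3 c' x := by
  have h1 := (hx 1).ne'
  have hs := (s1_pos hx).ne'
  have hd := (d3_pos hc' hx).ne'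
  rw [C1]; field_simp

lemma term1c (hc' : 0 < c') (hx : ∀ i, 0 < x i) :
    c * x 0 / (C1 c' x * x 1) = c * (x 0 / x 1) * s1 x / d3 c' x := by
  have h1 := (hx 1).ne'
  have hs := (s1_pos hx).ne'
  have hd := (d3_pos hc' hx).ne'
  rw [C1]; field_simp

lemma term2 (hc' : 0 < c') (hx : ∀ i, 0 < x i) :
    x 0 * x 2 / ((C1 c' x * x 1) ^ 2 * (C3 c' x * x 3))
      = x 0 * x 2 / (x 1 ^ 2 * x 3) * s1 x ^ 2 / (d3 c' x * d5 c' x) := by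
  have h1 := (hx 1).ne'; have h3 := (hx 3).ne'
  have hs := (s1_pos hx).ne'
  have hd := (d3_pos hc' hx).ne'
  have he := (d5_pos hc' hx).ne'
  rw [C1, C3]; field_simp

lemma term2c (hc' : 0 < c') (hx : ∀ i, 0 < x i) :
    c * x 0 * x 2 / ((C1 c' x * x 1) ^ 2 * (C3 c' x * x 3))
      = c * (x 0 * x 2 / (x 1 ^ 2 * x 3)) * s1 x ^ 2 / (d3 c' x * d5 c' x) := by
  have h1 := (hx 1).ne'; have h3 := (hx 3).ne'
  have hs := (s1_pos hx).ne'
  have hd := (d3_pos hc' hx).ne'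
  have he := (d5_pos hc' hx).ne'
  rw [C1, C3]; field_simp

lemma term3 (hc' : 0 < c') (hx : ∀ i, 0 < x i) :
    x 0 * x 2 * x 4 / ((C1 c' x * x 1) ^ 2 * (C3 c' x * x 3) ^ 2 * (C5 c' x * x 5))
      = x 0 * x 2 * x 4 / (x 1 ^ 2 * x 3 ^ 2 * x 5) * s1 x / (c' * d5 c' x) := by
  have h1 := (hx 1).ne'; have h3 := (hx 3).ne'; have h5 := (hx 5).ne'
  have hc0 := hc'.ne'
  have hs := (s1_pos hx).ne'
  have hd := (d3_pos hc' hx).ne'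
  have he := (d5_pos hc' hx).ne'
  rw [C1, C3, C5]; field_simp

lemma u_term1 (hc' : 0 < c') (hx : ∀ i, 0 < x i) :
    x 1 ^ 3 / (C2 c' x * x 2) = x 1 ^ 3 / x 2 * s2 x / d4 c' x := by
  have h2 := (hx 2).ne'
  have hs := (s2_pos hx).ne'
  have hd := (d4_pos hc' hx).ne'
  rw [C2]; field_simp

lemma u_term1c (hc' : 0 < c') (hx : ∀ i, 0 < x i) :
    c * x 1 ^ 3 / (C2 c' x * x 2) = c * (x 1 ^ 3 / x 2) * s2 x / d4 c' x := by
  have h2 := (hx 2).ne'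
  have hs := (s2_pos hx).ne'
  have hd := (d4_pos hc' hx).ne'
  rw [C2]; field_simp

lemma u_term2 (hc' : 0 < c') (hx : ∀ i, 0 < x i) :
    x 1 ^ 3 * x 3 ^ 3 / ((C2 c' x * x 2) ^ 2 * (C4 c' x * x 4))
      = x 1 ^ 3 * x 3 ^ 3 / (x 2 ^ 2 * x 4) * s2 x / (c' * d4 c' x) := by
  have h2 := (hx 2).ne'; have h4 := (hx 4).ne'
  have hc0 := hc'.ne'
  have hs := (s2_pos hx).ne'
  have hd := (d4_pos hc' hx).ne'
  rw [C2, C4]; field_simp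

lemma s1_comp (hc : 0 < c) (hc' : 0 < c') (hx : ∀ i, 0 < x i) :
    s1 (e1act c' x) = s1 x / c' := by
  have p0 := hx 0; have p1 := hx 1; have p2 := hx 2; have p3 := hx 3
  have p4 := hx 4; have p5 := hx 5
  have q1 : 0 < x 0 / x 1 := by positivity
  have q2 : 0 < x 0 * x 2 / (x 1 ^ 2 * x 3) := by positivity
  have q3 : 0 < x 0 * x 2 * x 4 / (x 1 ^ 2 * x 3 ^ 2 * x 5) := by positivity
  rw [show s1 (e1act c' x) = x 0 / (C1 c' x * x 1)
      + x 0 * x 2 / ((C1 c' x * x 1) ^ 2 * (C3 c' x * x 3))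
      + x 0 * x 2 * x 4 / ((C1 c' x * x 1) ^ 2 * (C3 c' x * x 3) ^ 2 * (C5 c' x * x 5))
      from rfl,
    term1 hc' hx, term2 hc' hx, term3 hc' hx, hS_eq, hD3_eq, hD5_eq]
  exact (gen1 c c' _ _ _ hc' q1 q2 q3).1

lemma d3_comp (hc : 0 < c) (hc' : 0 < c') (hx : ∀ i, 0 < x i) :
    d3 c (e1act c' x) = d3 (c * c') x * s1 x / (c' * d3 c' x) := by
  have p0 := hx 0; have p1 := hx 1; have p2 := hx 2; have p3 := hx 3
  have p4 := hx 4; have p5 := hx 5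
  have q1 : 0 < x 0 / x 1 := by positivity
  have q2 : 0 < x 0 * x 2 / (x 1 ^ 2 * x 3) := by positivity
  have q3 : 0 < x 0 * x 2 * x 4 / (x 1 ^ 2 * x 3 ^ 2 * x 5) := by positivity
  rw [show d3 c (e1act c' x) = c * x 0 / (C1 c' x * x 1)
      + x 0 * x 2 / ((C1 c' x * x 1) ^ 2 * (C3 c' x * x 3))
      + x 0 * x 2 * x 4 / ((C1 c' x * x 1) ^ 2 * (C3 c' x * x 3) ^ 2 * (C5 c' x * x 5))
      from rfl,
    term1c hc' hx, term2 hc' hx, term3 hc' hx, hS_eq, hD3_eq, hD5_eq,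
    show d3 (c * c') x = c * c' * (x 0 / x 1) + x 0 * x 2 / (x 1 ^ 2 * x 3)
      + x 0 * x 2 * x 4 / (x 1 ^ 2 * x 3 ^ 2 * x 5) by rw [d3]; ring]
  exact (gen1 c c' _ _ _ hc' q1 q2 q3).2.1

lemma d5_comp (hc : 0 < c) (hc' : 0 < c') (hx : ∀ i, 0 < x i) :
    d5 c (e1act c' x) = d5 (c * c') x * s1 x / (c' * d5 c' x) := by
  have p0 := hx 0; have p1 := hx 1; have p2 := hx 2; have p3 := hx 3
  have p4 := hx 4; have p5 := hx 5
  have q1 : 0 < x 0 / x 1 := by positivity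
  have q2 : 0 < x 0 * x 2 / (x 1 ^ 2 * x 3) := by positivity
  have q3 : 0 < x 0 * x 2 * x 4 / (x 1 ^ 2 * x 3 ^ 2 * x 5) := by positivity
  rw [show d5 c (e1act c' x) = c * x 0 / (C1 c' x * x 1)
      + c * x 0 * x 2 / ((C1 c' x * x 1) ^ 2 * (C3 c' x * x 3))
      + x 0 * x 2 * x 4 / ((C1 c' x * x 1) ^ 2 * (C3 c' x * x 3) ^ 2 * (C5 c' x * x 5))
      from rfl,
    term1c hc' hx, term2c hc' hx, term3 hc' hx, hS_eq, hD3_eq, hD5_eq,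
    show d5 (c * c') x = c * c' * (x 0 / x 1) + c * c' * (x 0 * x 2 / (x 1 ^ 2 * x 3))
      + x 0 * x 2 * x 4 / (x 1 ^ 2 * x 3 ^ 2 * x 5) by rw [d5]; ring]
  exact (gen1 c c' _ _ _ hc' q1 q2 q3).2.2

lemma s2_comp (hc : 0 < c) (hc' : 0 < c') (hx : ∀ i, 0 < x i) :
    s2 (e2act c' x) = s2 x / c' := by
  have p1 := hx 1; have p2 := hx 2; have p3 := hx 3; have p4 := hx 4
  have q1 : 0 < x 1 ^ 3 / x 2 := by positivity
  have q2 : 0 < x 1 ^ 3 * x 3 ^ 3 / (x 2 ^ 2 * x 4) := by positivity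
  rw [show s2 (e2act c' x) = x 1 ^ 3 / (C2 c' x * x 2)
      + x 1 ^ 3 * x 3 ^ 3 / ((C2 c' x * x 2) ^ 2 * (C4 c' x * x 4)) from rfl,
    u_term1 hc' hx, u_term2 hc' hx, hS2_eq, hD4_eq]
  exact (gen2 c c' _ _ hc' q1 q2).1

lemma d4_comp (hc : 0 < c) (hc' : 0 < c') (hx : ∀ i, 0 < x i) :
    d4 c (e2act c' x) = d4 (c * c') x * s2 x / (c' * d4 c' x) := by
  have p1 := hx 1; have p2 := hx 2; have p3 := hx 3; have p4 := hx 4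
  have q1 : 0 < x 1 ^ 3 / x 2 := by positivity
  have q2 : 0 < x 1 ^ 3 * x 3 ^ 3 / (x 2 ^ 2 * x 4) := by positivity
  rw [show d4 c (e2act c' x) = c * x 1 ^ 3 / (C2 c' x * x 2)
      + x 1 ^ 3 * x 3 ^ 3 / ((C2 c' x * x 2) ^ 2 * (C4 c' x * x 4)) from rfl,
    u_term1c hc' hx, u_term2 hc' hx, hS2_eq, hD4_eq,
    show d4 (c * c') x = c * c' * (x 1 ^ 3 / x 2)
      + x 1 ^ 3 * x 3 ^ 3 / (x 2 ^ 2 * x 4) by rw [d4]; ring]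
  exact (gen2 c c' _ _ hc' q1 q2).2

end comp

/-- e₁ and e₂ are rational ℂ^×-actions: eᵢ¹ = id and
eᵢ^c ∘ eᵢ^{c′} = eᵢ^{cc′} on (ℝ_{>0})⁶. -/
theorem e1_e2_are_actions :
    (∀ x : Fin 6 → ℝ, (∀ i, 0 < x i) → e1act 1 x = x) ∧
    (∀ c c' : ℝ, 0 < c → 0 < c' → ∀ x : Fin 6 → ℝ, (∀ i, 0 < x i) →
      e1act c (e1act c' x) = e1act (c * c') x) ∧
    (∀ x : Fin 6 → ℝ, (∀ i, 0 < x i) → e2act 1 x = x) ∧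
    (∀ c c' : ℝ, 0 < c → 0 < c' → ∀ x : Fin 6 → ℝ, (∀ i, 0 < x i) →
      e2act c (e2act c' x) = e2act (c * c') x) := by
  refine ⟨?_, ?_, ?_, ?_⟩
  · intro x hx
    have hs := (s1_pos hx).ne'
    have e3 : d3 1 x = s1 x := by rw [d3, s1]; ring
    have e5 : d5 1 x = s1 x := by rw [d5, s1]; ring
    have c1 : C1 1 x = 1 := by rw [C1, e3, div_self hs]
    have c3 : C3 1 x = 1 := by rw [C3, e5, e3, div_self hs]
    have c5 : C5 1 x = 1 := by rw [C5, e5, one_mul, div_self hs]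
    funext i
    fin_cases i
    · rfl
    · show C1 1 x * x 1 = x 1; rw [c1, one_mul]
    · rfl
    · show C3 1 x * x 3 = x 3; rw [c3, one_mul]
    · rfl
    · show C5 1 x * x 5 = x 5; rw [c5, one_mul]
  · intro c c' hc hc' x hx
    have hcc' : 0 < c * c' := mul_pos hc hc'
    have hs := (s1_pos hx).ne'
    have hd3 := (d3_pos hc' hx).ne'
    have hd5 := (d5_pos hc' hx).ne'
    have hd3' := (d3_pos hcc' hx).ne'
    have hd5' := (d5_pos hcc' hx).ne'
    have hc0 := hc.ne'
    have hc0' := hc'.ne'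
    funext i
    fin_cases i
    · rfl
    · show C1 c (e1act c' x) * (C1 c' x * x 1) = C1 (c * c') x * x 1
      rw [C1, C1, C1, s1_comp hc hc' hx, d3_comp hc hc' hx]
      field_simp
    · rfl
    · show C3 c (e1act c' x) * (C3 c' x * x 3) = C3 (c * c') x * x 3
      rw [C3, C3, C3, d3_comp hc hc' hx, d5_comp hc hc' hx]
      field_simp
    · rfl
    · show C5 c (e1act c' x) * (C5 c' x * x 5) = C5 (c * c') x * x 5
      rw [C5, C5, C5, s1_comp hc hc' hx, d5_comp hc hc' hx]
      field_simp
  · intro x hx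
    have hs := (s2_pos hx).ne'
    have e4 : d4 1 x = s2 x := by rw [d4, s2]; ring
    have c2 : C2 1 x = 1 := by rw [C2, e4, div_self hs]
    have c4 : C4 1 x = 1 := by rw [C4, e4, one_mul, div_self hs]
    funext i
    fin_cases i
    · rfl
    · rfl
    · show C2 1 x * x 2 = x 2; rw [c2, one_mul]
    · rfl
    · show C4 1 x * x 4 = x 4; rw [c4, one_mul]
    · rfl
  · intro c c' hc hc' x hx
    have hcc' : 0 < c * c' := mul_pos hc hc'
    have hs := (s2_pos hx).ne'
    have hd4 := (d4_pos hc' hx).ne'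
    have hd4' := (d4_pos hcc' hx).ne'
    have hc0 := hc.ne'
    have hc0' := hc'.ne'
    funext i
    fin_cases i
    · rfl
    · rfl
    · show C2 c (e2act c' x) * (C2 c' x * x 2) = C2 (c * c') x * x 2
      rw [C2, C2, C2, s2_comp hc hc' hx, d4_comp hc hc' hx]
      field_simp
    · rfl
    · show C4 c (e2act c' x) * (C4 c' x * x 4) = C4 (c * c') x * x 4
      rw [C4, C4, C4, s2_comp hc hc' hx, d4_comp hc hc' hx]
      field_simp
    · rfl
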